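/- Forward stepping maps consecutive equal symbols to consecutive positions: if PBWT_j[i'] = PBWT_j[i'+1], then fore[i'+1][j] = fore[i'][j] + 1. -/

import Mathlib

namespace PBWT

/-- The reversed prefix of length `j` (truncated at `w`) of haplotype `i`:
used to express the co-lexicographic order of prefixes. -/
def revPrefix {h w : ℕ} (S : Fin h → Fin w → ℕ) (j : ℕ) (i : Fin h) : List ℕ :=
  ((List.range j).filterMap (fun t => if ht : t < w then some (S i ⟨t, ht⟩) else none)).reverse

/-- `PA` is the stable sort of the haplotype indices by the co-lexicographic
order of their prefixes of length `j` (ties broken by original index). -/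
def IsStableSort {h w : ℕ} (S : Fin h → Fin w → ℕ) (j : ℕ) (PA : Fin h ≃ Fin h) : Prop :=
  ∀ a b : Fin h, a < b →
    List.Lex (· < ·) (revPrefix S j (PA a)) (revPrefix S j (PA b)) ∨
      (revPrefix S j (PA a) = revPrefix S j (PA b) ∧ (PA a).val < (PA b).val)

/-- Number of maximal runs of equal adjacent values in the sequence `f`. -/
def runCount {α : Type*} [DecidableEq α] {n : ℕ} (f : Fin n → α) : ℕ :=
  ((List.ofFn f).destutter (· ≠ ·)).length

/-- `h''`: the number of indices `i` with `S i ≠ S (i+1)`. -/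
noncomputable def adjDiff {h w : ℕ} (S : Fin h → Fin w → ℕ) : ℕ :=
  Nat.card {i : Fin h // ∃ h1 : (i : ℕ) + 1 < h, S i ≠ S ⟨(i : ℕ) + 1, h1⟩}

/-- The comparison relation used by the stable sort. -/
def R {h w : ℕ} (S : Fin h → Fin w → ℕ) (j : ℕ) (x y : Fin h) : Prop :=
  List.Lex (· < ·) (revPrefix S j x) (revPrefix S j y) ∨
    (revPrefix S j x = revPrefix S j y ∧ x.val < y.val)

lemma R_asymm {h w : ℕ} (S : Fin h → Fin w → ℕ) (j : ℕ) {x y : Fin h}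
    (h1 : R S j x y) (h2 : R S j y x) : False := by
  rcases h1 with h1 | ⟨e1, l1⟩ <;> rcases h2 with h2 | ⟨e2, l2⟩
  · exact asymm h1 h2
  · exact (irrefl_of (List.Lex (· < ·)) _) (e2 ▸ h1)
  · exact (irrefl_of (List.Lex (· < ·)) _) (e1 ▸ h2)
  · omega

lemma lex_head_le {a b : ℕ} {l m : List ℕ}
    (hlex : List.Lex (· < ·) (a :: l) (b :: m)) : a ≤ b := by
  cases hlex with
  | cons _ => exact le_rfl
  | rel hab => exact hab.le

lemma R_total {h w : ℕ} (S : Fin h → Fin w → ℕ) (j : ℕ) {x y : Fin h}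
    (hne : x ≠ y) : R S j x y ∨ R S j y x := by
  haveI : Std.Trichotomous (List.Lex (· < ·) : List ℕ → List ℕ → Prop) := List.Lex.trichotomous _
  rcases trichotomous_of (List.Lex (· < ·)) (revPrefix S j x) (revPrefix S j y) with hl | he | hg
  · exact Or.inl (Or.inl hl)
  · have : x.val ≠ y.val := fun hv => hne (Fin.ext hv)
    rcases Nat.lt_or_ge x.val y.val with hv | hv
    · exact Or.inl (Or.inr ⟨he, hv⟩)
    · exact Or.inr (Or.inr ⟨he.symm, lt_of_le_of_ne hv (Ne.symm this)⟩)
  · exact Or.inr (Or.inl hg)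

lemma sort_iff {h w : ℕ} {S : Fin h → Fin w → ℕ} {j : ℕ} {PA : Fin h ≃ Fin h}
    (hPA : IsStableSort S j PA) (a b : Fin h) : R S j (PA a) (PA b) ↔ a < b := by
  constructor
  · intro hr
    by_contra hab
    rcases lt_or_eq_of_le (not_lt.mp hab) with hba | hba
    · exact R_asymm S j hr (hPA b a hba)
    · subst hba; exact R_asymm S j hr hr
  · exact hPA a b

lemma revPrefix_succ {h w : ℕ} (S : Fin h → Fin w → ℕ) {j : ℕ} (hj : j < w) (z : Fin h) :
    revPrefix S (j + 1) z = S z ⟨j, hj⟩ :: revPrefix S j z := by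
  unfold revPrefix
  rw [List.range_succ, List.filterMap_append, List.reverse_append]
  simp [hj]

lemma R_succ_iff {h w : ℕ} (S : Fin h → Fin w → ℕ) {j : ℕ} (hj : j < w) {x y : Fin h}
    (hxy : S x ⟨j, hj⟩ = S y ⟨j, hj⟩) : R S (j + 1) x y ↔ R S j x y := by
  unfold R
  rw [revPrefix_succ S hj, revPrefix_succ S hj, hxy, List.lex_cons_iff, List.cons_eq_cons]
  simp

lemma R_succ_head_le {h w : ℕ} (S : Fin h → Fin w → ℕ) {j : ℕ} (hj : j < w) {x y : Fin h}
    (hr : R S (j + 1) x y) : S x ⟨j, hj⟩ ≤ S y ⟨j, hj⟩ := by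
  rw [R] at hr
  rw [revPrefix_succ S hj, revPrefix_succ S hj] at hr
  rcases hr with hl | ⟨he, _⟩
  · exact lex_head_le hl
  · exact le_of_eq (List.head_eq_of_cons_eq he)

theorem stmt6 (h w : ℕ) (S : Fin h → Fin w → ℕ) (j : ℕ) (hj : j < w)
    (PA1 PA2 : Fin h ≃ Fin h)
    (hPA1 : IsStableSort S j PA1) (hPA2 : IsStableSort S (j + 1) PA2)
    (i1 : Fin h) (hi : (i1 : ℕ) + 1 < h)
    (heq : S (PA1 i1) ⟨j, hj⟩ = S (PA1 ⟨(i1 : ℕ) + 1, hi⟩) ⟨j, hj⟩) :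
    (PA2.symm (PA1 ⟨(i1 : ℕ) + 1, hi⟩)).val = (PA2.symm (PA1 i1)).val + 1 := by
  set x := PA1 i1 with hx
  set y := PA1 ⟨(i1 : ℕ) + 1, hi⟩ with hy
  have hi1 : i1 < (⟨(i1 : ℕ) + 1, hi⟩ : Fin h) := by
    simp [Fin.lt_def]
  have hRj : R S j x y := hPA1 _ _ hi1
  have hRj1 : R S (j + 1) x y := (R_succ_iff S hj heq).mpr hRj
  set a := PA2.symm x with ha
  set b := PA2.symm y with hb
  have hab : a < b := by
    rw [← sort_iff hPA2]
    simpa [ha, hb, Equiv.apply_symm_apply] using hRj1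
  -- show b.val = a.val + 1
  by_contra hne
  have hlt : (a : ℕ) + 1 < (b : ℕ) := by
    have := (Fin.lt_def).mp hab; omega
  have hm : (a : ℕ) + 1 < h := lt_trans hlt b.isLt
  set m : Fin h := ⟨(a : ℕ) + 1, hm⟩ with hmdef
  set z := PA2 m with hz
  have ham : a < m := by simp [Fin.lt_def, hmdef]
  have hmb : m < b := by simp [Fin.lt_def, hmdef]; exact hlt
  have hxz : R S (j + 1) x z := by
    have := (sort_iff hPA2 a m).mpr ham
    simpa [hz, ha, hb, Equiv.apply_symm_apply] using this
  have hzy : R S (j + 1) z y := by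
    have := (sort_iff hPA2 m b).mpr hmb
    simpa [hz, ha, hb, Equiv.apply_symm_apply] using this
  have hcz : S x ⟨j, hj⟩ = S z ⟨j, hj⟩ :=
    le_antisymm (R_succ_head_le S hj hxz) (heq ▸ R_succ_head_le S hj hzy)
  have hzy' : S z ⟨j, hj⟩ = S y ⟨j, hj⟩ := by rw [← hcz, heq]
  have h1 : R S j x z := (R_succ_iff S hj hcz).mp hxz
  have h2 : R S j z y := (R_succ_iff S hj hzy').mp hzy
  have k1 : i1 < PA1.symm z := by
    rw [← sort_iff hPA1]
    simpa [hx, Equiv.apply_symm_apply] using h1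
  have k2 : PA1.symm z < (⟨(i1 : ℕ) + 1, hi⟩ : Fin h) := by
    rw [← sort_iff hPA1]
    simpa [hy, Equiv.apply_symm_apply] using h2
  have v1 := (Fin.lt_def).mp k1
  have v2 := (Fin.lt_def).mp k2
  have vv : ((⟨(i1 : ℕ) + 1, hi⟩ : Fin h) : ℕ) = (i1 : ℕ) + 1 := rfl
  omega

end PBWT
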